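/- Let α₀, α₁ ∈ ℂ and ρ ≥ 0. Define S(f) = |α₀|² + |α₁|² + 2|α₀||α₁|·cos(2πf + φ) for an arbitrary fixed φ ∈ ℝ, a = 1 + ρ(|α₀|² + |α₁|²), and b = 2ρ|α₀||α₁|. Then ∫₀¹ log₂(1 + ρ·S(f)) df = log₂((a + sqrt(a² − b²))/2). -/

import Mathlib

open Real intervalIntegral
open MeasureTheory

noncomputable def Jr (r : ℝ) : ℝ :=
  ∫ θ in (0:ℝ)..(2*π), Real.log (1 + r^2 + 2*r*Real.cos θ)

lemma Jr_pos_arg {r : ℝ} (hr : |r| < 1) (θ : ℝ) :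
    0 < 1 + r^2 + 2*r*Real.cos θ := by
  have h1 := Real.neg_one_le_cos θ
  have h2 := Real.cos_le_one θ
  nlinarith [sq_abs r, neg_abs_le r, le_abs_self r, abs_nonneg r,
    mul_self_nonneg (1 - |r|)]

lemma Jr_cont (r : ℝ) (hr : |r| < 1) :
    Continuous fun θ : ℝ => Real.log (1 + r^2 + 2*r*Real.cos θ) := by
  apply Continuous.log
  · continuity
  · exact fun θ => (Jr_pos_arg hr θ).ne'

lemma Jr_per (r : ℝ) :
    Function.Periodic (fun θ : ℝ => Real.log (1 + r^2 + 2*r*Real.cos θ)) (2*π) := by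
  intro x; simp [Real.cos_add_two_pi]

/-- shift lemma -/
lemma Jr_shift (r : ℝ) (hr : |r| < 1) :
    (∫ θ in (0:ℝ)..(2*π), Real.log (1 + r^2 - 2*r*Real.cos θ)) = Jr r := by
  have h : ∀ θ : ℝ, Real.log (1 + r^2 - 2*r*Real.cos θ)
      = Real.log (1 + r^2 + 2*r*Real.cos (θ + π)) := by
    intro θ; rw [Real.cos_add_pi]; ring_nf
  simp_rw [h]
  rw [intervalIntegral.integral_comp_add_right
      (fun θ => Real.log (1 + r^2 + 2*r*Real.cos θ)) π]
  have := (Jr_per r).intervalIntegral_add_eq π 0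
  simp only [zero_add] at this
  rw [Jr, ← this]
  norm_num
  ring_nf

lemma Jr_double (r : ℝ) (hr : |r| < 1) : Jr (r^2) = 2 * Jr r := by
  have hr2 : |r ^ 2| < 1 := by
    rw [abs_pow]
    exact pow_lt_one₀ (abs_nonneg r) hr two_ne_zero
  have hneg : |(-r)| < 1 := by rwa [abs_neg]
  have hneg2 : |(-(r^2))| < 1 := by rwa [abs_neg]
  have hpos1 : ∀ θ : ℝ, 0 < 1 + r^2 + 2*r*Real.cos θ := Jr_pos_arg hr
  have hpos2 : ∀ θ : ℝ, 0 < 1 + r^2 - 2*r*Real.cos θ := by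
    intro θ
    have := Jr_pos_arg hneg θ
    nlinarith [this]
  -- integrability
  have hc1 : Continuous fun θ : ℝ => Real.log (1 + r^2 + 2*r*Real.cos θ) :=
    Jr_cont r hr
  have hc2 : Continuous fun θ : ℝ => Real.log (1 + r^2 - 2*r*Real.cos θ) := by
    apply Continuous.log
    · continuity
    · exact fun θ => (hpos2 θ).ne'
  have step1 : Jr r + Jr r
      = ∫ θ in (0:ℝ)..(2*π), (Real.log (1 + r^2 + 2*r*Real.cos θ)
          + Real.log (1 + r^2 - 2*r*Real.cos θ)) := by
    rw [intervalIntegral.integral_add (hc1.intervalIntegrable _ _)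
      (hc2.intervalIntegrable _ _)]
    rw [Jr_shift r hr]
    rfl
  have step2 : ∀ θ : ℝ, Real.log (1 + r^2 + 2*r*Real.cos θ)
      + Real.log (1 + r^2 - 2*r*Real.cos θ)
      = Real.log (1 + (r^2)^2 - 2*(r^2)*Real.cos (2*θ)) := by
    intro θ
    rw [← Real.log_mul (hpos1 θ).ne' (hpos2 θ).ne']
    congr 1
    rw [Real.cos_two_mul]
    ring
  have hg : Continuous fun u : ℝ => Real.log (1 + (r^2)^2 - 2*(r^2)*Real.cos u) := by
    apply Continuous.log
    · continuity
    · intro u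
      have := Jr_pos_arg hneg2 u
      nlinarith [this]
  have hgper : Function.Periodic
      (fun u : ℝ => Real.log (1 + (r^2)^2 - 2*(r^2)*Real.cos u)) (2*π) := by
    intro x; simp [Real.cos_add_two_pi]
  have step3 : (∫ θ in (0:ℝ)..(2*π), Real.log (1 + (r^2)^2 - 2*(r^2)*Real.cos (2*θ)))
      = ((2:ℝ)⁻¹) • ∫ u in (0:ℝ)..(4*π), Real.log (1 + (r^2)^2 - 2*(r^2)*Real.cos u) := by
    have := intervalIntegral.integral_comp_mul_left
      (fun u : ℝ => Real.log (1 + (r^2)^2 - 2*(r^2)*Real.cos u))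
      (a := (0:ℝ)) (b := 2*π) (c := (2:ℝ)) two_ne_zero
    rw [this, show (2:ℝ)*0 = 0 by ring, show (2:ℝ)*(2*π) = 4*π by ring]
  have step4 : (∫ u in (0:ℝ)..(4*π), Real.log (1 + (r^2)^2 - 2*(r^2)*Real.cos u))
      = 2 * ∫ u in (0:ℝ)..(2*π), Real.log (1 + (r^2)^2 - 2*(r^2)*Real.cos u) := by
    have h4 : (4:ℝ)*π = 2*π + 2*π := by ring
    rw [h4, hgper.intervalIntegral_add_eq_add 0 (2*π)
      (fun t₁ t₂ => hg.intervalIntegrable t₁ t₂)]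
    simp only [zero_add]
    ring
  have step5 : (∫ u in (0:ℝ)..(2*π), Real.log (1 + (r^2)^2 - 2*(r^2)*Real.cos u))
      = Jr (r^2) := Jr_shift (r^2) hr2
  have : Jr r + Jr r = Jr (r^2) := by
    rw [step1]
    simp_rw [step2]
    rw [step3, step4, step5, smul_eq_mul]
    ring
  linarith

lemma Jr_zero (r : ℝ) (hr : |r| < 1) : Jr r = 0 := by
  have habs : ∀ n : ℕ, |r ^ (2^n)| < 1 := by
    intro n
    rw [abs_pow]
    exact pow_lt_one₀ (abs_nonneg r) hr (Nat.pos_of_ne_zero (by positivity)).ne'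
  have hpow : ∀ n : ℕ, Jr (r ^ (2^n)) = 2^n * Jr r := by
    intro n
    induction n with
    | zero => simp
    | succ n ih =>
      have h : r ^ (2^(n+1)) = (r ^ (2^n))^2 := by
        rw [← pow_mul, pow_succ]
      rw [h, Jr_double _ (habs n), ih]
      ring
  set C := |Real.log ((1-|r|)^2)| + Real.log 4 with hCdef
  have hlog4 : 0 ≤ Real.log 4 := Real.log_nonneg (by norm_num)
  have hC : 0 ≤ C := by positivity
  have h1r : 0 < 1 - |r| := by linarith
  have hbound : ∀ s : ℝ, |s| ≤ |r| → |Jr s| ≤ C * (2*π) := by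
    intro s hs
    have hs1 : |s| < 1 := lt_of_le_of_lt hs hr
    have := intervalIntegral.norm_integral_le_of_norm_le_const
      (a := (0:ℝ)) (b := 2*π) (C := C)
      (f := fun θ => Real.log (1 + s^2 + 2*s*Real.cos θ)) ?_
    · rw [Real.norm_eq_abs] at this
      calc |Jr s| ≤ C * |2*π - 0| := this
        _ = C * (2*π) := by
            rw [sub_zero, abs_of_pos (by positivity)]
    · intro x _
      rw [Real.norm_eq_abs]
      have hpos : 0 < 1 + s^2 + 2*s*Real.cos x := Jr_pos_arg hs1 x
      have hub : 1 + s^2 + 2*s*Real.cos x ≤ 4 := by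
        have h1 := Real.neg_one_le_cos x
        have h2 := Real.cos_le_one x
        nlinarith [sq_abs s, neg_abs_le s, le_abs_self s, abs_nonneg s]
      have hlb : (1-|r|)^2 ≤ 1 + s^2 + 2*s*Real.cos x := by
        have h1 := Real.neg_one_le_cos x
        have h2 := Real.cos_le_one x
        nlinarith [sq_abs s, neg_abs_le s, le_abs_self s, abs_nonneg s]
      rw [abs_le]
      constructor
      · have := Real.log_le_log (by positivity) hlb
        have h3 : -|Real.log ((1-|r|)^2)| ≤ Real.log ((1-|r|)^2) := neg_abs_le _
        rw [hCdef]
        linarith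
      · have := Real.log_le_log hpos hub
        rw [hCdef]
        linarith [abs_nonneg (Real.log ((1-|r|)^2))]
  have key : ∀ n : ℕ, |Jr r| ≤ C * (2*π) * ((1:ℝ)/2)^n := by
    intro n
    have h1 : |Jr (r ^ (2^n))| ≤ C * (2*π) := hbound _ (by
      rw [abs_pow]
      calc |r| ^ 2^n ≤ |r| ^ 1 :=
            pow_le_pow_of_le_one (abs_nonneg r) hr.le (Nat.one_le_two_pow)
        _ = |r| := pow_one _)
    rw [hpow n, abs_mul, abs_of_pos (by positivity : (0:ℝ) < (2:ℝ)^n)] at h1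
    have h2 : ((1:ℝ)/2)^n = ((2:ℝ)^n)⁻¹ := by
      rw [div_pow, one_pow, one_div]
    rw [h2, ← div_eq_mul_inv, le_div_iff₀ (by positivity : (0:ℝ) < (2:ℝ)^n)]
    linarith [h1]
  have htend : Filter.Tendsto (fun n : ℕ => C * (2*π) * ((1:ℝ)/2)^n)
      Filter.atTop (nhds 0) := by
    have := tendsto_pow_atTop_nhds_zero_of_lt_one (by norm_num : (0:ℝ) ≤ 1/2)
      (by norm_num : (1:ℝ)/2 < 1)
    simpa using this.const_mul (C * (2*π))
  have : |Jr r| ≤ 0 := ge_of_tendsto' htend key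
  have := abs_nonneg (Jr r)
  rw [abs_eq_zero.mp (le_antisymm ‹|Jr r| ≤ 0› (abs_nonneg _))]


/-- Equation (20): closed form of the rate integral of the soft-handoff model,
`∫₀¹ log₂(1 + ρ S(f)) df = log₂((a + √(a² - b²))/2)`. -/
theorem two_tap_rate_integral (α₀ α₁ : ℂ) (ρ : ℝ) (hρ : 0 ≤ ρ) (φ : ℝ)
    (S : ℝ → ℝ)
    (hS : ∀ f : ℝ, S f = ‖α₀‖ ^ 2 + ‖α₁‖ ^ 2 +
      2 * ‖α₀‖ * ‖α₁‖ * Real.cos (2 * Real.pi * f + φ))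
    (a b : ℝ)
    (ha : a = 1 + ρ * (‖α₀‖ ^ 2 + ‖α₁‖ ^ 2))
    (hb : b = 2 * ρ * ‖α₀‖ * ‖α₁‖) :
    ∫ f in (0:ℝ)..1, Real.logb 2 (1 + ρ * S f) =
      Real.logb 2 ((a + Real.sqrt (a ^ 2 - b ^ 2)) / 2) := by
  have hx : 0 ≤ ‖α₀‖ := norm_nonneg _
  have hy : 0 ≤ ‖α₁‖ := norm_nonneg _
  have hab : 1 ≤ a - b := by
    rw [ha, hb]
    nlinarith [mul_nonneg hρ (sq_nonneg (‖α₀‖ - ‖α₁‖))]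
  have hb0 : 0 ≤ b := by rw [hb]; positivity
  have ha1 : 1 ≤ a := by linarith
  have hdiff : 0 ≤ a^2 - b^2 := by nlinarith
  obtain ⟨s, hsdef⟩ : ∃ s : ℝ, s = Real.sqrt (a^2 - b^2) := ⟨_, rfl⟩
  have hs0 : 0 ≤ s := hsdef ▸ Real.sqrt_nonneg _
  have hs2 : s^2 = a^2 - b^2 := by rw [hsdef]; exact Real.sq_sqrt hdiff
  obtain ⟨A, hAdef⟩ : ∃ A : ℝ, A = (a + s)/2 := ⟨_, rfl⟩
  have hA0 : 0 < A := by rw [hAdef]; linarith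
  obtain ⟨r, hrdef⟩ : ∃ r : ℝ, r = b / (2*A) := ⟨_, rfl⟩
  have hr0 : 0 ≤ r := by rw [hrdef]; positivity
  have hrlt : r < 1 := by
    rw [hrdef, div_lt_one (by positivity)]
    rw [hAdef]
    linarith
  have hr : |r| < 1 := by rwa [abs_of_nonneg hr0]
  have hA4 : 4*A^2 + b^2 = 4*a*A := by rw [hAdef]; nlinarith [hs2]
  have h2Ar : 2*A*r = b := by rw [hrdef]; field_simp
  have hAr2 : A*r^2 = b^2/(4*A) := by
    rw [hrdef, div_pow]; field_simp; ring
  have hAeq : A + b^2/(4*A) = a := by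
    field_simp
    nlinarith [hA4]
  have hkey : ∀ f : ℝ, 1 + ρ * S f
      = A * (1 + r^2 + 2*r*Real.cos (2*π*f + φ)) := by
    intro f
    have lhs_eq : 1 + ρ * S f = a + b * Real.cos (2*π*f + φ) := by
      rw [hS f, ha, hb]; ring
    rw [lhs_eq]
    linear_combination (-Real.cos (2*π*f + φ)) * h2Ar - hAr2 - hAeq
  have hposA : ∀ f : ℝ, 0 < 1 + r^2 + 2*r*Real.cos (2*π*f + φ) :=
    fun f => Jr_pos_arg hr _
  have hlogb : ∀ f : ℝ, Real.logb 2 (1 + ρ * S f)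
      = Real.logb 2 A + Real.logb 2 (1 + r^2 + 2*r*Real.cos (2*π*f + φ)) := by
    intro f
    rw [hkey f, Real.logb_mul hA0.ne' (hposA f).ne']
  simp_rw [hlogb]
  have hcont : Continuous fun f : ℝ =>
      Real.logb 2 (1 + r^2 + 2*r*Real.cos (2*π*f + φ)) := by
    apply Continuous.div_const
    apply Continuous.log
    · exact continuous_const.add (continuous_const.mul (Real.continuous_cos.comp
        ((continuous_const.mul continuous_id).add continuous_const)))
    · exact fun f => (hposA f).ne'
  rw [intervalIntegral.integral_add (intervalIntegrable_const)
    (hcont.intervalIntegrable _ _)]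
  have hint2 : (∫ f in (0:ℝ)..1,
      Real.logb 2 (1 + r^2 + 2*r*Real.cos (2*π*f + φ))) = 0 := by
    have hexp : ∀ f : ℝ, Real.logb 2 (1 + r^2 + 2*r*Real.cos (2*π*f + φ))
        = Real.log (1 + r^2 + 2*r*Real.cos (2*π*f + φ)) / Real.log 2 := by
      intro f; rw [Real.logb]
    simp_rw [hexp]
    rw [intervalIntegral.integral_div]
    have hsub : (∫ f in (0:ℝ)..1,
        Real.log (1 + r^2 + 2*r*Real.cos (2*π*f + φ))) = 0 := by
      have hcml := intervalIntegral.integral_comp_mul_left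
        (fun u : ℝ => Real.log (1 + r^2 + 2*r*Real.cos (u + φ)))
        (a := (0:ℝ)) (b := 1) (c := 2*π) (by positivity)
      have hbeta : (∫ f in (0:ℝ)..1, Real.log (1 + r^2 + 2*r*Real.cos (2*π*f + φ)))
          = ∫ f in (0:ℝ)..1,
            (fun u : ℝ => Real.log (1 + r^2 + 2*r*Real.cos (u + φ))) (2*π*f) := rfl
      rw [hbeta, hcml, show (2*π*(0:ℝ)) = 0 by ring, show (2*π*(1:ℝ)) = 2*π by ring]
      have hshift : (∫ u in (0:ℝ)..(2*π), Real.log (1 + r^2 + 2*r*Real.cos (u + φ)))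
          = Jr r := by
        rw [intervalIntegral.integral_comp_add_right
          (fun u => Real.log (1 + r^2 + 2*r*Real.cos u)) φ]
        have := (Jr_per r).intervalIntegral_add_eq φ 0
        simp only [zero_add] at this
        rw [Jr, ← this, zero_add]
        norm_num
        ring_nf
      rw [hshift, Jr_zero r hr]
      simp
    rw [hsub, zero_div]
  rw [hint2, intervalIntegral.integral_const]
  simp [hAdef, hsdef]
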